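/- Let n ≥ 1, let P_Y be a probability measure on ℝ^n with differentiable density p_Y satisfying ‖∇p_Y(y)‖ ≤ K for all y and some K > 0. Let ỹ ∈ ℝ^n, B > 0, and δ ∈ ℝ^n with ‖δ‖ ≤ B and p_Y(ỹ + δ) = a > 0. Let (μ_y)_{y∈ℝ^n} be a family of probability measures on ℝ^m with finite first moments such that for every r > 0 there is C_r < ∞ (non-decreasing in r) with W₁(μ_{y₁}, μ_{y₂}) ≤ C_r‖y₁ − y₂‖ whenever ‖y₁‖, ‖y₂‖ ≤ r. Set k = a/(2K) + ‖ỹ‖ + B. Let P_Z be a probability measure on ℝ^d and G : ℝ^n × ℝ^d → ℝ^m such that every pushforward G(y,·)_#P_Z has finite first moment, y ↦ G(y,z) is differentiable with ‖∇_y G(y,z)‖ ≤ L_k for all z ∈ supp(P_Z) and all ‖y‖ ≤ k, for some L_k > 0, and the function y ↦ W₁(μ_y, G(y,·)_#P_Z) is measurable with ∫ W₁(μ_y, G(y,·)_#P_Z) dP_Y(y) ≤ ε for some 0 < ε ≤ 1. Then W₁(μ_{ỹ}, G(ỹ + δ,·)_#P_Z) ≤ C_{‖ỹ‖+B}·B +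 (L_k + C_k)·ε^{1/(n+1)}·a/(2K) + 2ε^{1/(n+1)}/(S_n (a/(2K))^n a), where S_n = π^{n/2}/Γ(n/2 + 1). -/

import Mathlib

open MeasureTheory Filter Topology Matrix

/-- The Wasserstein-1 distance: infimum over couplings of the expected distance. -/
noncomputable def W1 {E : Type*} [MeasurableSpace E] [NormedAddCommGroup E]
    (μ ν : Measure E) : ℝ :=
  (⨅ π ∈ {π : Measure (E × E) |
      π.map Prod.fst = μ ∧ π.map Prod.snd = ν ∧ IsProbabilityMeasure π},
    ∫⁻ p, ‖p.1 - p.2‖₊ ∂π).toReal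

/-- A measure has finite first moment. -/
def HasFiniteFirstMoment {E : Type*} [MeasurableSpace E] [NormedAddCommGroup E]
    (μ : Measure E) : Prop :=
  ∫⁻ x, ‖x‖₊ ∂μ ≠ ⊤

/-- Lebesgue volume of the unit ball in ℝ^n. -/
noncomputable def Sn (n : ℕ) : ℝ := Real.pi ^ ((n : ℝ) / 2) / Real.Gamma ((n : ℝ) / 2 + 1)

/-- The (topological) support of a measure: points all of whose open neighborhoods
have positive measure. -/
def measSupport {E : Type*} [TopologicalSpace E] [MeasurableSpace E]
    (μ : Measure E) : Set E := {x | ∀ U : Set E, IsOpen U → x ∈ U → 0 < μ U}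

open ProbabilityTheory
open scoped ENNReal NNReal

section aux

variable {E : Type*} [NormedAddCommGroup E] [MeasurableSpace E] [BorelSpace E]
  [SecondCountableTopology E]

/-- ENNReal-valued Wasserstein distance. -/
noncomputable def W1e (μ ν : Measure E) : ℝ≥0∞ :=
  ⨅ π ∈ {π : Measure (E × E) |
      π.map Prod.fst = μ ∧ π.map Prod.snd = ν ∧ IsProbabilityMeasure π},
    ∫⁻ p, ‖p.1 - p.2‖₊ ∂π

omit [BorelSpace E] [SecondCountableTopology E] in
lemma W1_eq_W1e (μ ν : Measure E) : W1 μ ν = (W1e μ ν).toReal := rfl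

omit [BorelSpace E] [SecondCountableTopology E] in
lemma W1e_le_cost {μ ν : Measure E} {π : Measure (E × E)}
    (h1 : π.map Prod.fst = μ) (h2 : π.map Prod.snd = ν) (h3 : IsProbabilityMeasure π) :
    W1e μ ν ≤ ∫⁻ p, ‖p.1 - p.2‖₊ ∂π :=
  iInf₂_le π ⟨h1, h2, h3⟩

omit [SecondCountableTopology E] in
lemma cost_le_moments {μ ν : Measure E} {π : Measure (E × E)}
    (h1 : π.map Prod.fst = μ) (h2 : π.map Prod.snd = ν) :
    ∫⁻ p, ‖p.1 - p.2‖₊ ∂π ≤ (∫⁻ x, ‖x‖₊ ∂μ) + ∫⁻ x, ‖x‖₊ ∂ν := by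
  calc ∫⁻ p, (‖p.1 - p.2‖₊ : ℝ≥0∞) ∂π
      ≤ ∫⁻ p, ((‖p.1‖₊ : ℝ≥0∞) + ‖p.2‖₊) ∂π := by
        refine lintegral_mono fun p => ?_
        rw [← ENNReal.coe_add]
        exact ENNReal.coe_le_coe.2 (nnnorm_sub_le _ _)
    _ = (∫⁻ p : E × E, (‖p.1‖₊ : ℝ≥0∞) ∂π) + ∫⁻ p : E × E, (‖p.2‖₊ : ℝ≥0∞) ∂π :=
        lintegral_add_left measurable_fst.nnnorm.coe_nnreal_ennreal _
    _ = (∫⁻ x, ‖x‖₊ ∂μ) + ∫⁻ x, ‖x‖₊ ∂ν := by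
        rw [← h1, ← h2, lintegral_map measurable_nnnorm.coe_nnreal_ennreal measurable_fst,
          lintegral_map measurable_nnnorm.coe_nnreal_ennreal measurable_snd]

omit [SecondCountableTopology E] in
lemma W1e_lt_top {μ ν : Measure E} [IsProbabilityMeasure μ] [IsProbabilityMeasure ν]
    (hμ : HasFiniteFirstMoment μ) (hν : HasFiniteFirstMoment ν) : W1e μ ν < ⊤ := by
  have h1 : (μ.prod ν).map Prod.fst = μ := by
    have := Measure.fst_prod (μ := μ) (ν := ν)
    simpa [Measure.fst] using this
  have h2 : (μ.prod ν).map Prod.snd = ν := by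
    have := Measure.snd_prod (μ := μ) (ν := ν)
    simpa [Measure.snd] using this
  refine lt_of_le_of_lt (le_trans (W1e_le_cost h1 h2 inferInstance)
    (cost_le_moments h1 h2)) ?_
  rw [lt_top_iff_ne_top]
  exact ENNReal.add_ne_top.2 ⟨hμ, hν⟩

end aux

section glue

variable {E : Type*} [NormedAddCommGroup E] [MeasurableSpace E] [BorelSpace E]
  [SecondCountableTopology E] [CompleteSpace E] [Nonempty E]

lemma glue_lemma {μ ρ ν : Measure E} (π₁ π₂ : Measure (E × E))
    (h11 : π₁.map Prod.fst = μ) (h12 : π₁.map Prod.snd = ρ) (h13 : IsProbabilityMeasure π₁)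
    (h21 : π₂.map Prod.fst = ρ) (h22 : π₂.map Prod.snd = ν) (h23 : IsProbabilityMeasure π₂) :
    ∃ π : Measure (E × E), π.map Prod.fst = μ ∧ π.map Prod.snd = ν ∧ IsProbabilityMeasure π ∧
      ∫⁻ p, ‖p.1 - p.2‖₊ ∂π ≤ (∫⁻ p, ‖p.1 - p.2‖₊ ∂π₁) + ∫⁻ p, ‖p.1 - p.2‖₊ ∂π₂ := by
  haveI := h13; haveI := h23
  haveI : IsProbabilityMeasure ρ := h12 ▸ Measure.isProbabilityMeasure_map measurable_snd.aemeasurable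
  set κ : Kernel E E := π₂.condKernel with hκ
  have hfst : π₂.fst = ρ := by rw [Measure.fst, h21]
  have hdis : ρ ⊗ₘ κ = π₂ := by rw [← hfst, hκ]; exact π₂.disintegrate π₂.condKernel
  set κ' : Kernel (E × E) E := κ.comap Prod.snd measurable_snd with hκ'
  haveI : IsMarkovKernel κ' := Kernel.IsMarkovKernel.comap _ _
  set τ : Measure ((E × E) × E) := π₁ ⊗ₘ κ' with hτ
  have hm : Measurable fun p : (E × E) × E => (p.1.1, p.2) :=
    (measurable_fst.comp measurable_fst).prodMk measurable_snd
  refine ⟨τ.map (fun p => (p.1.1, p.2)), ?_, ?_, ?_, ?_⟩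
  · rw [Measure.map_map measurable_fst hm]
    have heq : (Prod.fst ∘ fun p : (E × E) × E => (p.1.1, p.2)) = Prod.fst ∘ Prod.fst := rfl
    rw [heq, ← Measure.map_map measurable_fst measurable_fst]
    have : τ.map Prod.fst = π₁ := by
      have := Measure.fst_compProd π₁ κ'
      rwa [Measure.fst] at this
    rw [this, h11]
  · rw [Measure.map_map measurable_snd hm]
    have hsnd : (Prod.snd ∘ fun p : (E × E) × E => (p.1.1, p.2)) = Prod.snd := rfl
    rw [hsnd]
    ext s hs
    rw [Measure.map_apply measurable_snd hs, hτ,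
      Measure.compProd_apply (measurable_snd hs)]
    have : ∀ p : E × E, κ' p (Prod.mk p ⁻¹' (Prod.snd ⁻¹' s)) = κ p.2 s := fun p => rfl
    simp_rw [this]
    have h1 : ∫⁻ p : E × E, κ p.2 s ∂π₁ = ∫⁻ r, κ r s ∂ρ := by
      rw [← h12, lintegral_map (Kernel.measurable_coe κ hs) measurable_snd]
    rw [h1, ← h22, Measure.map_apply measurable_snd hs, ← hdis,
      Measure.compProd_apply (measurable_snd hs)]
    rfl
  · have : IsProbabilityMeasure τ := by infer_instance
    exact Measure.isProbabilityMeasure_map hm.aemeasurable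
  · rw [lintegral_map (f := fun p : E × E => (‖p.1 - p.2‖₊ : ℝ≥0∞))
        ((measurable_fst.sub measurable_snd).nnnorm.coe_nnreal_ennreal) hm]
    calc ∫⁻ p : (E × E) × E, (‖p.1.1 - p.2‖₊ : ℝ≥0∞) ∂τ
        ≤ ∫⁻ p : (E × E) × E, ((‖p.1.1 - p.1.2‖₊ : ℝ≥0∞) + ‖p.1.2 - p.2‖₊) ∂τ := by
          refine lintegral_mono fun p => ?_
          rw [← ENNReal.coe_add]
          refine ENNReal.coe_le_coe.2 ?_
          have := nnnorm_add_le (p.1.1 - p.1.2) (p.1.2 - p.2)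
          simpa using this
      _ = (∫⁻ p : (E × E) × E, (‖p.1.1 - p.1.2‖₊ : ℝ≥0∞) ∂τ)
            + ∫⁻ p : (E × E) × E, (‖p.1.2 - p.2‖₊ : ℝ≥0∞) ∂τ :=
          lintegral_add_left (((measurable_fst.comp measurable_fst).sub
            (measurable_snd.comp measurable_fst)).nnnorm.coe_nnreal_ennreal) _
      _ ≤ (∫⁻ p, ‖p.1 - p.2‖₊ ∂π₁) + ∫⁻ p, ‖p.1 - p.2‖₊ ∂π₂ := by
          gcongr
          · have hτfst : τ.map Prod.fst = π₁ := by
              have := Measure.fst_compProd π₁ κ'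
              rwa [Measure.fst] at this
            rw [← hτfst, lintegral_map (f := fun p : E × E => (‖p.1 - p.2‖₊ : ℝ≥0∞))
        ((measurable_fst.sub measurable_snd).nnnorm.coe_nnreal_ennreal) measurable_fst]
          · have hm2 : Measurable fun p : (E × E) × E => (‖p.1.2 - p.2‖₊ : ℝ≥0∞) :=
              ((measurable_snd.comp measurable_fst).sub measurable_snd).nnnorm.coe_nnreal_ennreal
            rw [hτ, Measure.lintegral_compProd hm2]
            have : ∀ p : E × E, ∫⁻ y, (‖p.2 - y‖₊ : ℝ≥0∞) ∂(κ' p) = ∫⁻ y, (‖p.2 - y‖₊ : ℝ≥0∞) ∂(κ p.2) :=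
              fun p => rfl
            simp_rw [this]
            have h2 : ∫⁻ p : E × E, ∫⁻ y, (‖p.2 - y‖₊ : ℝ≥0∞) ∂(κ p.2) ∂π₁
                = ∫⁻ r, ∫⁻ y, (‖r - y‖₊ : ℝ≥0∞) ∂(κ r) ∂ρ := by
              rw [← h12, lintegral_map ?_ measurable_snd]
              exact Measurable.lintegral_kernel_prod_right'
                ((measurable_fst.sub measurable_snd).nnnorm.coe_nnreal_ennreal)
            rw [h2, ← hdis, Measure.lintegral_compProd (f := fun p : E × E => (‖p.1 - p.2‖₊ : ℝ≥0∞))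
        ((measurable_fst.sub measurable_snd).nnnorm.coe_nnreal_ennreal)]

lemma W1e_triangle (μ ρ ν : Measure E) : W1e μ ν ≤ W1e μ ρ + W1e ρ ν := by
  refine ENNReal.le_of_forall_pos_le_add fun e he hb => ?_
  have hne : (W1e μ ρ) ≠ ⊤ ∧ (W1e ρ ν) ≠ ⊤ := by
    constructor <;> [exact (lt_of_le_of_lt le_self_add hb).ne; exact (lt_of_le_of_lt le_add_self hb).ne]
  have he2 : ((e : ℝ≥0∞) / 2) ≠ 0 := by
    simp [ENNReal.div_eq_zero_iff, he.ne']
  have h1 : W1e μ ρ < W1e μ ρ + e / 2 := ENNReal.lt_add_right hne.1 he2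
  have h2 : W1e ρ ν < W1e ρ ν + e / 2 := ENNReal.lt_add_right hne.2 he2
  rw [W1e, iInf_lt_iff] at h1 h2
  obtain ⟨π₁, hπ₁⟩ := h1
  obtain ⟨π₂, hπ₂⟩ := h2
  rw [iInf_lt_iff] at hπ₁ hπ₂
  obtain ⟨⟨g11, g12, g13⟩, hc1⟩ := hπ₁
  obtain ⟨⟨g21, g22, g23⟩, hc2⟩ := hπ₂
  obtain ⟨π, m1, m2, m3, mc⟩ := glue_lemma π₁ π₂ g11 g12 g13 g21 g22 g23
  have hle : W1e μ ν ≤ ∫⁻ p, ‖p.1 - p.2‖₊ ∂π := iInf₂_le π ⟨m1, m2, m3⟩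
  calc W1e μ ν ≤ _ := hle
    _ ≤ _ := mc
    _ ≤ (W1e μ ρ + e / 2) + (W1e ρ ν + e / 2) := by gcongr <;> [exact hc1.le; exact hc2.le]
    _ = W1e μ ρ + W1e ρ ν + e := by
      rw [add_add_add_comm, ENNReal.add_halves]

end glue

lemma measSupport_compl_null {E : Type*} [TopologicalSpace E] [MeasurableSpace E]
    [SecondCountableTopology E] (μ : Measure E) : μ (measSupport μ)ᶜ = 0 := by
  obtain ⟨b, hbc, -, hbb⟩ := TopologicalSpace.exists_countable_basis E
  refine measure_mono_null (t := ⋃₀ {U ∈ b | μ U = 0}) ?_ ?_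
  · intro x hx
    simp only [measSupport, Set.mem_compl_iff, Set.mem_setOf_eq, not_forall] at hx
    obtain ⟨U, hUopen, hxU, hU0⟩ := hx
    have hU0 : μ U = 0 := by simpa using hU0
    obtain ⟨v, hvb, hxv, hvU⟩ := hbb.exists_subset_of_mem_open hxU hUopen
    exact ⟨v, ⟨hvb, le_antisymm (hU0 ▸ measure_mono hvU) zero_le⟩, hxv⟩
  · exact (measure_sUnion_null_iff (hbc.mono (Set.sep_subset _ _))).2 fun s hs => hs.2

set_option maxHeartbeats 2000000 in
/-- worst-case bound for adversarial attacks on the observation. -/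
theorem stmt_10 {n m d : ℕ} (hn : 1 ≤ n)
    (pY : EuclideanSpace ℝ (Fin n) → ℝ)
    (PY : Measure (EuclideanSpace ℝ (Fin n)))
    (hPYprob : IsProbabilityMeasure PY)
    (hPY : PY = volume.withDensity (fun y => ENNReal.ofReal (pY y)))
    (K : ℝ) (hK : 0 < K)
    (DY : EuclideanSpace ℝ (Fin n) → (EuclideanSpace ℝ (Fin n) →L[ℝ] ℝ))
    (hderivY : ∀ y, HasFDerivAt pY (DY y) y)
    (hDYbound : ∀ y, ‖DY y‖ ≤ K)
    (ytil : EuclideanSpace ℝ (Fin n)) (B : ℝ) (hB : 0 < B)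
    (δ : EuclideanSpace ℝ (Fin n)) (hδ : ‖δ‖ ≤ B)
    (a : ℝ) (ha : 0 < a) (hpa : pY (ytil + δ) = a)
    (μ : EuclideanSpace ℝ (Fin n) → Measure (EuclideanSpace ℝ (Fin m)))
    (hμprob : ∀ y, IsProbabilityMeasure (μ y))
    (hμmom : ∀ y, HasFiniteFirstMoment (μ y))
    (C : ℝ → ℝ) (hCmono : Monotone C)
    (hClip : ∀ r > (0 : ℝ), ∀ y₁ y₂ : EuclideanSpace ℝ (Fin n), ‖y₁‖ ≤ r → ‖y₂‖ ≤ r →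
      W1 (μ y₁) (μ y₂) ≤ C r * ‖y₁ - y₂‖)
    (k : ℝ) (hk : k = a / (2 * K) + ‖ytil‖ + B)
    (PZ : Measure (EuclideanSpace ℝ (Fin d))) (hPZprob : IsProbabilityMeasure PZ)
    (G : EuclideanSpace ℝ (Fin n) → EuclideanSpace ℝ (Fin d) → EuclideanSpace ℝ (Fin m))
    (hGmeas : ∀ y : EuclideanSpace ℝ (Fin n), Measurable (G y))
    (hGmom : ∀ y : EuclideanSpace ℝ (Fin n), HasFiniteFirstMoment (PZ.map (G y)))
    (Lk : ℝ) (hLk : 0 < Lk)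
    (DG : EuclideanSpace ℝ (Fin n) → EuclideanSpace ℝ (Fin d) →
      (EuclideanSpace ℝ (Fin n) →L[ℝ] EuclideanSpace ℝ (Fin m)))
    (hderivG : ∀ z ∈ measSupport PZ, ∀ y : EuclideanSpace ℝ (Fin n), ‖y‖ ≤ k →
      HasFDerivAt (fun y' => G y' z) (DG y z) y ∧ ‖DG y z‖ ≤ Lk)
    (hWmeas : Measurable fun y => W1 (μ y) (PZ.map (G y)))
    (ε : ℝ) (hε0 : 0 < ε) (hε1 : ε ≤ 1)
    (hint : ∫⁻ y, ENNReal.ofReal (W1 (μ y) (PZ.map (G y))) ∂PY ≤ ENNReal.ofReal ε) :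
    W1 (μ ytil) (PZ.map (G (ytil + δ))) ≤
      C (‖ytil‖ + B) * B + (Lk + C k) * (ε ^ (1 / ((n : ℝ) + 1)) * a / (2 * K)) +
        2 * ε ^ (1 / ((n : ℝ) + 1)) / (Sn n * (a / (2 * K)) ^ n * a) := by
  haveI : Nonempty (Fin n) := ⟨⟨0, hn⟩⟩
  set r : ℝ := a / (2 * K) with hr_def
  have hr : 0 < r := by positivity
  set q : ℝ := ε ^ (1 / ((n : ℝ) + 1)) with hq_def
  have hq0 : 0 < q := Real.rpow_pos_of_pos hε0 _
  have hq1 : q ≤ 1 := Real.rpow_le_one hε0.le hε1 (by positivity)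
  set rε : ℝ := q * r with hrε_def
  have hrε0 : 0 < rε := by positivity
  have hrεr : rε ≤ r := by
    calc rε = q * r := rfl
      _ ≤ 1 * r := by gcongr
      _ = r := one_mul r
  set c : EuclideanSpace ℝ (Fin n) := ytil + δ with hc_def
  have hSn : 0 < Sn n :=
    div_pos (Real.rpow_pos_of_pos Real.pi_pos _) (Real.Gamma_pos_of_pos (by positivity))
  set t : ℝ := 2 * q / (Sn n * r ^ n * a) with ht_def
  have ht0 : 0 < t := by positivity
  -- norms
  have hnc : ‖c‖ ≤ ‖ytil‖ + B := le_trans (norm_add_le _ _) (by linarith)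
  have hkpos : 0 < k := by rw [hk]; positivity
  have hck : ‖c‖ ≤ k := by rw [hk]; linarith
  have hytilk : ‖ytil‖ ≤ k := by rw [hk]; have := norm_nonneg ytil; linarith
  -- C is nonnegative at positive radii
  have hC : ∀ ρ : ℝ, 0 < ρ → 0 ≤ C ρ := by
    intro ρ hρ
    set v : EuclideanSpace ℝ (Fin n) := EuclideanSpace.single (⟨0, hn⟩ : Fin n) ρ with hv_def
    have hv : ‖v‖ = ρ := by
      rw [hv_def, EuclideanSpace.norm_single, Real.norm_eq_abs, abs_of_pos hρ]
    have h0 := hClip ρ hρ 0 v (by simp; positivity) (le_of_eq hv)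
    have hW : 0 ≤ W1 (μ 0) (μ v) := ENNReal.toReal_nonneg
    have hvn : (0 : ℝ) < ‖(0 : EuclideanSpace ℝ (Fin n)) - v‖ := by
      rw [zero_sub, norm_neg, hv]; exact hρ
    nlinarith [h0, hW, hvn]
  -- Lipschitz bound for pY
  have hlip : ∀ y₁ y₂ : EuclideanSpace ℝ (Fin n), ‖pY y₁ - pY y₂‖ ≤ K * ‖y₁ - y₂‖ := by
    intro y₁ y₂
    exact Convex.norm_image_sub_le_of_norm_hasFDerivWithin_le
      (fun x _ => (hderivY x).hasFDerivWithinAt) (fun x _ => hDYbound x) convex_univ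
      trivial trivial
  set A : Set (EuclideanSpace ℝ (Fin n)) := Metric.ball c rε with hA_def
  have hlow : ∀ y ∈ A, a / 2 < pY y := by
    intro y hy
    have hd : ‖y - c‖ < rε := by
      rw [← dist_eq_norm]; exact hy
    have h1 : ‖pY c - pY y‖ ≤ K * ‖c - y‖ := hlip c y
    have h2 : ‖c - y‖ = ‖y - c‖ := norm_sub_rev c y
    rw [hpa] at h1
    have h3 : K * ‖y - c‖ < K * rε := by gcongr
    have h4 : K * rε ≤ K * r := by gcongr
    have h5 : K * r = a / 2 := by rw [hr_def]; field_simp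
    have h1' : a - pY y ≤ K * ‖y - c‖ := by
      have hh := (le_abs_self (a - pY y))
      rw [Real.norm_eq_abs, h2] at h1
      linarith
    linarith
  -- volume of the ball A
  have hvol : volume A = ENNReal.ofReal (Sn n * rε ^ n) := by
    rw [hA_def, EuclideanSpace.volume_ball, Fintype.card_fin,
      ← ENNReal.ofReal_pow hrε0.le, ← ENNReal.ofReal_mul (by positivity)]
    congr 1
    have hs : Real.sqrt Real.pi ^ n = Real.pi ^ ((n : ℝ) / 2) := by
      rw [Real.sqrt_eq_rpow, ← Real.rpow_natCast (Real.pi ^ ((1:ℝ)/2)) n,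
        ← Real.rpow_mul Real.pi_pos.le]
      norm_num
      rw [mul_comm, mul_one_div]
    rw [Sn, hs]
    ring
  -- PY of A via density
  have hPYA : PY A = ∫⁻ y in A, ENNReal.ofReal (pY y) ∂volume := by
    rw [hPY, withDensity_apply _ measurableSet_ball]
  -- strict lower bound for PY A
  have hApos : volume A ≠ 0 := by
    rw [hvol]
    simp only [ne_eq, ENNReal.ofReal_eq_zero, not_le]
    positivity
  have hpYmeas : Measurable pY := by
    have : Continuous pY := by
      rw [continuous_iff_continuousAt]
      exact fun x => (hderivY x).continuousAt
    exact this.measurable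
  have key : ENNReal.ofReal (a / 2) * volume A < PY A := by
    rw [hPYA]
    have hconst : ENNReal.ofReal (a / 2) * volume A
        = ∫⁻ y in A, ENNReal.ofReal (a / 2) ∂volume := by
      rw [setLIntegral_const]
    rw [hconst]
    refine setLIntegral_strict_mono measurableSet_ball hApos
      (hpYmeas.ennreal_ofReal) ?_ ?_
    · rw [setLIntegral_const]
      exact ENNReal.mul_ne_top ENNReal.ofReal_ne_top measure_ball_lt_top.ne
    · refine Filter.Eventually.of_forall fun y => fun hy => ?_
      exact ENNReal.ofReal_lt_ofReal_iff_of_nonneg (by positivity) |>.2 (hlow y hy)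
  -- key arithmetic: t * (a/2 * (Sn n * rε^n)) = ε
  have hqpow : q ^ (n + 1) = ε := by
    rw [hq_def, ← Real.rpow_natCast (ε ^ (1 / ((n : ℝ) + 1))) (n + 1),
      ← Real.rpow_mul hε0.le]
    push_cast
    rw [one_div, inv_mul_cancel₀ (by positivity), Real.rpow_one]
  have harith : t * (a / 2 * (Sn n * rε ^ n)) = ε := by
    have h1 : rε ^ n = q ^ n * r ^ n := mul_pow q r n
    have h2 : q * q ^ n = ε := by rw [← pow_succ']; exact hqpow
    rw [ht_def, h1]
    field_simp
    rw [← h2]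
  -- existence of a good point y₀
  obtain ⟨y₀, hy₀A, hy₀W⟩ : ∃ y₀ ∈ A, W1 (μ y₀) (PZ.map (G y₀)) ≤ t := by
    by_contra hcon
    push_neg at hcon
    have hge : ENNReal.ofReal ε < ∫⁻ y, ENNReal.ofReal (W1 (μ y) (PZ.map (G y))) ∂PY := by
      calc ENNReal.ofReal ε = ENNReal.ofReal t * (ENNReal.ofReal (a / 2) * volume A) := by
            rw [hvol, ← ENNReal.ofReal_mul (by positivity),
              ← ENNReal.ofReal_mul (by positivity), harith]
        _ < ENNReal.ofReal t * PY A := by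
            refine (ENNReal.mul_lt_mul_iff_right ?_ ?_).2 key
            · simp only [ne_eq, ENNReal.ofReal_eq_zero, not_le]; exact ht0
            · exact ENNReal.ofReal_ne_top
        _ = ∫⁻ y in A, ENNReal.ofReal t ∂PY := by rw [setLIntegral_const]
        _ ≤ ∫⁻ y in A, ENNReal.ofReal (W1 (μ y) (PZ.map (G y))) ∂PY := by
            refine setLIntegral_mono hWmeas.ennreal_ofReal fun y hy => ?_
            exact ENNReal.ofReal_le_ofReal (hcon y hy).le
        _ ≤ ∫⁻ y, ENNReal.ofReal (W1 (μ y) (PZ.map (G y))) ∂PY :=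
            lintegral_mono' Measure.restrict_le_self le_rfl
    exact absurd hint (not_le.2 hge)
  have hy₀c : ‖y₀ - c‖ ≤ rε := by
    rw [← dist_eq_norm]; exact (Metric.mem_ball.1 hy₀A).le
  have hy₀k : ‖y₀‖ ≤ k := by
    have : ‖y₀‖ ≤ ‖y₀ - c‖ + ‖c‖ := by simpa using norm_add_le (y₀ - c) c
    rw [hk]
    have : ‖y₀‖ ≤ rε + (‖ytil‖ + B) := by linarith [hy₀c, hnc, this]
    linarith [hrεr, this]
  -- probability instances
  haveI : IsProbabilityMeasure (μ ytil) := hμprob ytil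
  haveI : IsProbabilityMeasure (μ c) := hμprob c
  haveI : IsProbabilityMeasure (μ y₀) := hμprob y₀
  haveI : IsProbabilityMeasure (PZ.map (G y₀)) :=
    Measure.isProbabilityMeasure_map (hGmeas y₀).aemeasurable
  haveI : IsProbabilityMeasure (PZ.map (G c)) :=
    Measure.isProbabilityMeasure_map (hGmeas c).aemeasurable
  -- a.e. membership in the support
  have hae : ∀ᵐ z ∂PZ, z ∈ measSupport PZ := by
    rw [ae_iff]
    exact measSupport_compl_null PZ
  -- pushforward Lipschitz bound
  have hpush : W1e (PZ.map (G y₀)) (PZ.map (G c)) ≤ ENNReal.ofReal (Lk * ‖y₀ - c‖) := by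
    have hf : Measurable fun z => (G y₀ z, G c z) := (hGmeas y₀).prodMk (hGmeas c)
    have hmap1 : (PZ.map fun z => (G y₀ z, G c z)).map Prod.fst = PZ.map (G y₀) := by
      rw [Measure.map_map measurable_fst hf]; rfl
    have hmap2 : (PZ.map fun z => (G y₀ z, G c z)).map Prod.snd = PZ.map (G c) := by
      rw [Measure.map_map measurable_snd hf]; rfl
    refine le_trans (W1e_le_cost hmap1 hmap2 (Measure.isProbabilityMeasure_map hf.aemeasurable)) ?_
    rw [lintegral_map (f := fun p : EuclideanSpace ℝ (Fin m) × EuclideanSpace ℝ (Fin m) => (‖p.1 - p.2‖₊ : ℝ≥0∞))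
        ((measurable_fst.sub measurable_snd).nnnorm.coe_nnreal_ennreal) hf]
    calc ∫⁻ z, (‖G y₀ z - G c z‖₊ : ℝ≥0∞) ∂PZ
        ≤ ∫⁻ _z, ENNReal.ofReal (Lk * ‖y₀ - c‖) ∂PZ := by
          refine lintegral_mono_ae ?_
          filter_upwards [hae] with z hz
          rw [← ENNReal.ofReal_coe_nnreal, coe_nnnorm]
          refine ENNReal.ofReal_le_ofReal ?_
          exact Convex.norm_image_sub_le_of_norm_hasFDerivWithin_le
            (fun x hx => ((hderivG z hz x (mem_closedBall_zero_iff.1 hx)).1).hasFDerivWithinAt)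
            (fun x hx => (hderivG z hz x (mem_closedBall_zero_iff.1 hx)).2)
            (convex_closedBall 0 k) (mem_closedBall_zero_iff.2 hck)
            (mem_closedBall_zero_iff.2 hy₀k)
      _ = ENNReal.ofReal (Lk * ‖y₀ - c‖) := by simp
  -- conversion from real W1 bounds to W1e bounds
  have convW : ∀ (α β : Measure (EuclideanSpace ℝ (Fin m))), W1e α β ≠ ⊤ →
      ∀ b : ℝ, 0 ≤ b → W1 α β ≤ b → W1e α β ≤ ENNReal.ofReal b := by
    intro α β hne b hb hw
    rw [W1_eq_W1e] at hw
    exact (ENNReal.le_ofReal_iff_toReal_le hne hb).2 hw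
  have hCk0 : 0 ≤ C k := hC k hkpos
  have hC1 : 0 ≤ C (‖ytil‖ + B) := hC _ (by positivity)
  have hqr : ‖c - y₀‖ ≤ q * r := by rw [norm_sub_rev]; exact hy₀c
  -- the four W1e bounds
  have e1 : W1e (μ ytil) (μ c) ≤ ENNReal.ofReal (C (‖ytil‖ + B) * B) := by
    refine convW _ _ (W1e_lt_top (hμmom ytil) (hμmom c)).ne _ (by positivity) ?_
    have hb1 : W1 (μ ytil) (μ c) ≤ C (‖ytil‖ + B) * ‖ytil - c‖ :=
      hClip (‖ytil‖ + B) (by positivity) ytil c (by linarith [norm_nonneg ytil]) hnc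
    have hnδ : ‖ytil - c‖ = ‖δ‖ := by
      rw [hc_def]
      simp
    refine le_trans hb1 ?_
    rw [hnδ]
    exact mul_le_mul_of_nonneg_left hδ hC1
  have e2 : W1e (μ c) (μ y₀) ≤ ENNReal.ofReal (C k * (q * r)) := by
    refine convW _ _ (W1e_lt_top (hμmom c) (hμmom y₀)).ne _ (by positivity) ?_
    refine le_trans (hClip k hkpos c y₀ hck hy₀k) ?_
    exact mul_le_mul_of_nonneg_left hqr hCk0
  have e3 : W1e (μ y₀) (PZ.map (G y₀)) ≤ ENNReal.ofReal t :=
    convW _ _ (W1e_lt_top (hμmom y₀) (hGmom y₀)).ne _ ht0.le hy₀W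
  have e4 : W1e (PZ.map (G y₀)) (PZ.map (G c)) ≤ ENNReal.ofReal (Lk * (q * r)) := by
    refine le_trans hpush (ENNReal.ofReal_le_ofReal ?_)
    have : ‖y₀ - c‖ ≤ q * r := hy₀c
    exact mul_le_mul_of_nonneg_left this hLk.le
  -- triangle chain
  have chain : W1e (μ ytil) (PZ.map (G c)) ≤
      ENNReal.ofReal (C (‖ytil‖ + B) * B) + (ENNReal.ofReal (C k * (q * r)) +
        (ENNReal.ofReal t + ENNReal.ofReal (Lk * (q * r)))) := by
    calc W1e (μ ytil) (PZ.map (G c))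
        ≤ W1e (μ ytil) (μ c) + W1e (μ c) (PZ.map (G c)) := W1e_triangle _ _ _
      _ ≤ W1e (μ ytil) (μ c) + (W1e (μ c) (μ y₀) + W1e (μ y₀) (PZ.map (G c))) := by
          gcongr
          exact W1e_triangle _ _ _
      _ ≤ W1e (μ ytil) (μ c) + (W1e (μ c) (μ y₀) +
            (W1e (μ y₀) (PZ.map (G y₀)) + W1e (PZ.map (G y₀)) (PZ.map (G c)))) := by
          gcongr
          exact W1e_triangle _ _ _
      _ ≤ _ := by
          gcongr
  -- wrap up
  have hS : W1e (μ ytil) (PZ.map (G c)) ≤ ENNReal.ofReal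
      (C (‖ytil‖ + B) * B + (C k * (q * r) + (t + Lk * (q * r)))) := by
    refine le_trans chain ?_
    have hn1 : 0 ≤ C (‖ytil‖ + B) * B := mul_nonneg hC1 hB.le
    have hn2 : 0 ≤ C k * (q * r) := mul_nonneg hCk0 (by positivity)
    have hn3 : 0 ≤ Lk * (q * r) := by positivity
    rw [ENNReal.ofReal_add hn1 (by linarith), ENNReal.ofReal_add hn2 (by linarith),
      ENNReal.ofReal_add ht0.le hn3]
  have hfinal : W1 (μ ytil) (PZ.map (G c)) ≤
      C (‖ytil‖ + B) * B + (C k * (q * r) + (t + Lk * (q * r))) := by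
    rw [W1_eq_W1e]
    have hn1 : 0 ≤ C (‖ytil‖ + B) * B := mul_nonneg hC1 hB.le
    have hn2 : 0 ≤ C k * (q * r) := mul_nonneg hCk0 (by positivity)
    have hn3 : 0 ≤ Lk * (q * r) := by positivity
    exact ENNReal.toReal_le_of_le_ofReal (by linarith) hS
  have hqar : q * a / (2 * K) = q * r := by rw [hr_def]; ring
  rw [hqar]
  have hexp : (Lk + C k) * (q * r) = Lk * (q * r) + C k * (q * r) := by ring
  linarith [hfinal]
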